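/- Fix integers n ≥ 1 and 0 < i < k, and let 0 ≤ l ≤ n. The affine map γ_l : Δ_l × Δ_{n−l} → ℝ^n is a bijection from Δ_l × Δ_{n−l} onto Δ_n(l), and its linear part has determinant (i/k)^l · ((k−i)/k)^{n−l} > 0; in particular γ_l is injective and orientation preserving. -/

import Mathlib

noncomputable section
open MeasureTheory Set

/-- The simplex `Δ_n = {t ∈ ℝ^n : 1 ≥ t_1 ≥ t_2 ≥ … ≥ t_n ≥ 0}`. -/
def ordSimplex (n : ℕ) : Set (Fin n → ℝ) :=
  {t | (∀ i, 0 ≤ t i) ∧ (∀ i, t i ≤ 1) ∧ ∀ i j : Fin n, i ≤ j → t j ≤ t i}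

/-- Extension of a finite tuple by `0` outside its range. -/
def extF {m : ℕ} (x : Fin m → ℝ) (n : ℕ) : ℝ := if h : n < m then x ⟨n, h⟩ else 0

/-- The affine map `γ_l : Δ_l × Δ_{n−l} → ℝ^n`,
`γ_l(u,v) = ((i/k)u_1 + (k−i)/k, …, (i/k)u_l + (k−i)/k, ((k−i)/k)v_1, …, ((k−i)/k)v_{n−l})`. -/
def gammaMap (n i k l : ℕ) (u : Fin l → ℝ) (v : Fin (n - l) → ℝ) : Fin n → ℝ :=
  fun m => if (m : ℕ) < l then ((i : ℝ) / k) * extF u (m : ℕ) + ((k : ℝ) - (i : ℝ)) / k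
    else (((k : ℝ) - (i : ℝ)) / k) * extF v ((m : ℕ) - l)

/-- `Δ_n(l) = {t ∈ ℝ^n : 1 ≥ t_1 ≥ … ≥ t_l ≥ (k−i)/k ≥ t_{l+1} ≥ … ≥ t_n ≥ 0}`. -/
def simplexPart (n k i l : ℕ) : Set (Fin n → ℝ) :=
  {t | (∀ m, 0 ≤ t m) ∧ (∀ m, t m ≤ 1) ∧ (∀ m m' : Fin n, m ≤ m' → t m' ≤ t m) ∧
    (∀ m : Fin n, (m : ℕ) < l → ((k : ℝ) - (i : ℝ)) / k ≤ t m) ∧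
    (∀ m : Fin n, l ≤ (m : ℕ) → t m ≤ ((k : ℝ) - (i : ℝ)) / k)}

/-- Concatenation of `u ∈ ℝ^l` and `v ∈ ℝ^{n-l}` into a vector in `ℝ^n`. -/
def concatF (n l : ℕ) (u : Fin l → ℝ) (v : Fin (n - l) → ℝ) : Fin n → ℝ :=
  fun m => if (m : ℕ) < l then extF u (m : ℕ) else extF v ((m : ℕ) - l)

/-- `γ_l` is a bijection from `Δ_l × Δ_{n−l}` onto `Δ_n(l)`; it is affine with linear part the
diagonal matrix with entries `i/k` (`l` times) and `(k−i)/k` (`n−l` times), whose determinant is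
`(i/k)^l ((k−i)/k)^{n−l} > 0`; in particular `γ_l` is injective and orientation preserving. -/
theorem stmt4 (n i k l : ℕ) (hn : 1 ≤ n) (hi0 : 0 < i) (hik : i < k) (hl : l ≤ n) :
    Set.BijOn (fun p : (Fin l → ℝ) × (Fin (n - l) → ℝ) => gammaMap n i k l p.1 p.2)
      (ordSimplex l ×ˢ ordSimplex (n - l)) (simplexPart n k i l) ∧
    (∀ (u : Fin l → ℝ) (v : Fin (n - l) → ℝ),
      gammaMap n i k l u v =
        (Matrix.diagonal fun m : Fin n =>
            if (m : ℕ) < l then (i : ℝ) / k else ((k : ℝ) - (i : ℝ)) / k).mulVec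
          (concatF n l u v) +
        (fun m : Fin n => if (m : ℕ) < l then ((k : ℝ) - (i : ℝ)) / k else 0)) ∧
    (Matrix.diagonal fun m : Fin n =>
        if (m : ℕ) < l then (i : ℝ) / k else ((k : ℝ) - (i : ℝ)) / k).det
      = ((i : ℝ) / k) ^ l * (((k : ℝ) - (i : ℝ)) / k) ^ (n - l) ∧
    0 < ((i : ℝ) / k) ^ l * (((k : ℝ) - (i : ℝ)) / k) ^ (n - l) ∧
    Function.Injective
      (fun p : (Fin l → ℝ) × (Fin (n - l) → ℝ) => gammaMap n i k l p.1 p.2) := by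
  have hk0 : (0:ℝ) < k := by exact_mod_cast hi0.trans hik
  set a : ℝ := (i : ℝ) / k with ha_def
  set b : ℝ := ((k : ℝ) - (i : ℝ)) / k with hb_def
  have ha : 0 < a := by positivity
  have hb : 0 < b := by
    apply div_pos _ hk0
    have : (i:ℝ) < k := by exact_mod_cast hik
    linarith
  have hab : a + b = 1 := by rw [ha_def, hb_def, ← add_div]; field_simp; ring
  have hb1 : b ≤ 1 := by nlinarith
  -- injectivity
  have hinj : Function.Injective
      (fun p : (Fin l → ℝ) × (Fin (n - l) → ℝ) => gammaMap n i k l p.1 p.2) := by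
    rintro ⟨u, v⟩ ⟨u', v'⟩ h
    simp only [Prod.mk.injEq]
    constructor
    · funext j
      have hj : (j : ℕ) < n := lt_of_lt_of_le j.2 hl
      have := congrFun h (⟨j, hj⟩ : Fin n)
      simp only [gammaMap, if_pos j.2] at this
      have h2 : extF u (j:ℕ) = extF u' (j:ℕ) := by
        have := (mul_left_cancel₀ (ne_of_gt ha) (by linarith) : extF u (j:ℕ) = extF u' (j:ℕ))
        exact this
      simpa [extF, j.2] using h2
    · funext j
      have hj : l + (j : ℕ) < n := by omega
      have := congrFun h (⟨l + j, hj⟩ : Fin n)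
      simp only [gammaMap] at this
      rw [if_neg (by omega), if_neg (by omega)] at this
      have h2 : extF v (l + (j:ℕ) - l) = extF v' (l + (j:ℕ) - l) :=
        mul_left_cancel₀ (ne_of_gt hb) this
      have hlt : l + (j:ℕ) - l = (j:ℕ) := by omega
      rw [hlt] at h2
      simpa [extF, j.2] using h2
  refine ⟨⟨?_, hinj.injOn, ?_⟩, ?_, ?_, ?_, hinj⟩
  · -- MapsTo
    rintro ⟨u, v⟩ ⟨⟨hu0, hu1, humono⟩, hv0, hv1, hvmono⟩
    have keyu : ∀ (m : Fin n) (hm : (m:ℕ) < l), extF u (m:ℕ) = u ⟨m, hm⟩ := fun m hm => by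
      simp [extF, hm]
    have keyv : ∀ (m : Fin n) (hm : l ≤ (m:ℕ)), extF v ((m:ℕ) - l) = v ⟨(m:ℕ) - l, by omega⟩ :=
        fun m hm => by
      have : (m:ℕ) - l < n - l := by omega
      simp [extF, this]
    refine ⟨?_, ?_, ?_, ?_, ?_⟩
    · intro m
      simp only [gammaMap]
      split
      · next hm => rw [keyu m hm]; have := hu0 ⟨m, by omega⟩; nlinarith
      · next hm => rw [keyv m (by omega)]; have := hv0 ⟨(m:ℕ) - l, by omega⟩; positivity
    · intro m
      simp only [gammaMap]
      split
      · next hm => rw [keyu m hm]; have := hu1 ⟨m, by omega⟩; nlinarith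
      · next hm => rw [keyv m (by omega)]; have := hv1 ⟨(m:ℕ) - l, by omega⟩; nlinarith
    · intro m m' hmm
      simp only [gammaMap]
      rcases lt_or_ge (m:ℕ) l with hm | hm <;> rcases lt_or_ge (m':ℕ) l with hm' | hm'
      · rw [if_pos hm, if_pos hm', keyu m hm, keyu m' hm']
        have := humono ⟨m, by omega⟩ ⟨m', by omega⟩ (by exact_mod_cast hmm)
        nlinarith
      · rw [if_pos hm, if_neg (by omega), keyu m hm, keyv m' (by omega)]
        have h1 := hv1 ⟨(m':ℕ) - l, by omega⟩
        have h2 := hu0 ⟨m, by omega⟩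
        nlinarith
      · exact absurd (Fin.le_def.mp hmm) (by omega)
      · rw [if_neg (by omega), if_neg (by omega), keyv m (by omega), keyv m' (by omega)]
        have := hvmono ⟨(m:ℕ) - l, by omega⟩ ⟨(m':ℕ) - l, by omega⟩
          (by simp [Fin.le_def]; have := Fin.le_def.mp hmm; omega)
        nlinarith
    · intro m hm
      simp only [gammaMap, if_pos hm]
      rw [keyu m hm]
      have := hu0 ⟨m, by omega⟩; nlinarith
    · intro m hm
      simp only [gammaMap, if_neg (by omega : ¬ (m:ℕ) < l)]
      rw [keyv m hm]
      have := hv1 ⟨(m:ℕ) - l, by omega⟩; nlinarith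
  · -- SurjOn
    rintro t ⟨ht0, ht1, htmono, htb, htb'⟩
    refine ⟨(fun j : Fin l => (t ⟨j, by omega⟩ - b) / a,
             fun j : Fin (n-l) => t ⟨l + j, by omega⟩ / b), ⟨⟨?_, ?_, ?_⟩, ?_, ?_, ?_⟩, ?_⟩
    · intro j
      have h1 := htb ⟨j, by omega⟩ j.2
      exact div_nonneg (by linarith) ha.le
    · intro j
      rw [div_le_one ha]
      have := ht1 ⟨j, by omega⟩
      linarith
    · intro j j' hjj
      have := htmono ⟨j, by omega⟩ ⟨j', by omega⟩
        (Fin.mk_le_mk.mpr (Fin.le_def.mp hjj))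
      exact div_le_div_of_nonneg_right (by linarith) ha.le
    · intro j
      exact div_nonneg (ht0 ⟨l + j, by omega⟩) hb.le
    · intro j
      rw [div_le_one hb]
      exact htb' ⟨l + j, by omega⟩ (by simp)
    · intro j j' hjj
      have := htmono ⟨l + j, by omega⟩ ⟨l + j', by omega⟩
        (Fin.mk_le_mk.mpr (by have := Fin.le_def.mp hjj; omega))
      exact div_le_div_of_nonneg_right this hb.le
    · funext m
      simp only [gammaMap]
      split
      · next hm =>
        rw [show extF (fun j : Fin l => (t ⟨j, by omega⟩ - b) / a) (m:ℕ)
            = (t ⟨(m:ℕ), m.2⟩ - b) / a by simp [extF, hm]]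
        rw [mul_comm, div_mul_cancel₀ _ ha.ne']
        simp [Fin.eta, hb_def]
      · next hm =>
        have hml : (m:ℕ) - l < n - l := by omega
        rw [show extF (fun j : Fin (n-l) => t ⟨l + j, by omega⟩ / b) ((m:ℕ) - l)
            = t ⟨l + ((m:ℕ) - l), by omega⟩ / b by simp [extF, hml]]
        have : (⟨l + ((m:ℕ) - l), by omega⟩ : Fin n) = m := by
          apply Fin.ext; simp; omega
        rw [this, mul_comm, div_mul_cancel₀ _ hb.ne']
  · -- affine identity
    intro u v
    funext m
    simp only [gammaMap, Pi.add_apply, Matrix.mulVec_diagonal, concatF]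
    split <;> ring
  · -- determinant
    rw [Matrix.det_diagonal]
    have hcard : (Finset.univ.filter (fun m : Fin n => (m : ℕ) < l)).card = l := by
      have h : Finset.filter (fun x => x < l) (Finset.range n) = Finset.range l := by
        ext x; simp; omega
      rw [Finset.card_filter, Fin.sum_univ_eq_sum_range (fun j => if j < l then 1 else 0),
        ← Finset.card_filter, h, Finset.card_range]
    have hcard' : (Finset.univ.filter (fun m : Fin n => ¬ (m : ℕ) < l)).card = n - l := by
      have := Finset.card_filter_add_card_filter_not
        (s := (Finset.univ : Finset (Fin n))) (p := fun m : Fin n => (m : ℕ) < l)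
      simp only [Finset.card_univ, Fintype.card_fin] at this
      omega
    rw [Finset.prod_ite, Finset.prod_const, Finset.prod_const, hcard, hcard']
  · positivity
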